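/- Let P ∈ ℍ[t] be a quaternion polynomial with no nonconstant real polynomial factor, and suppose the real polynomial P·conj(P)·M divides a real polynomial S, where M ∈ ℝ[t]. If conj(P)·S' = conj(P)·P·P₁ for quaternion polynomials with S' real, where conj(P) has no real factor, then P·conj(P) divides S'. -/

import Mathlib

open Polynomial
open scoped Quaternion

/-- Coefficientwise conjugation of a quaternion polynomial. -/
noncomputable def qconj (P : ℍ[ℝ][X]) : ℍ[ℝ][X] :=
  ∑ i ∈ P.support, Polynomial.C (star (P.coeff i)) * Polynomial.X ^ i

lemma qconj_coeff (P : ℍ[ℝ][X]) (n : ℕ) : (qconj P).coeff n = star (P.coeff n) := by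
  rw [qconj, finset_sum_coeff]
  simp only [coeff_C_mul, coeff_X_pow, mul_ite, mul_one, mul_zero]
  rw [Finset.sum_eq_single n (fun i _ hne => if_neg fun h => hne h.symm)
      (fun hn => by simp [Polynomial.notMem_support_iff.mp hn])]
  simp

lemma qconj_mul (A B : ℍ[ℝ][X]) : qconj (A * B) = qconj B * qconj A := by
  apply Polynomial.ext
  intro n
  rw [qconj_coeff, coeff_mul, coeff_mul, star_sum]
  conv_rhs => rw [← Finset.HasAntidiagonal.map_swap_antidiagonal, Finset.sum_map]
  simp [qconj_coeff, star_mul]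

lemma qconj_qconj (A : ℍ[ℝ][X]) : qconj (qconj A) = A := by
  apply Polynomial.ext
  intro n; simp [qconj_coeff]

lemma C_alg_comm (a : ℝ) (q : ℍ[ℝ][X]) :
    C (algebraMap ℝ ℍ[ℝ] a) * q = q * C (algebraMap ℝ ℍ[ℝ] a) := by
  apply Polynomial.ext
  intro m; rw [coeff_C_mul, coeff_mul_C, Algebra.commutes]

lemma map_commute (r : ℝ[X]) (q : ℍ[ℝ][X]) :
    r.map (algebraMap ℝ ℍ[ℝ]) * q = q * r.map (algebraMap ℝ ℍ[ℝ]) := by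
  induction r using Polynomial.induction_on' with
  | add p p' hp hp' => rw [Polynomial.map_add, add_mul, mul_add, hp, hp']
  | monomial k a =>
    rw [Polynomial.map_monomial, ← Polynomial.C_mul_X_pow_eq_monomial,
      mul_assoc, X_pow_mul, ← mul_assoc, C_alg_comm, mul_assoc]

lemma exists_real (Q : ℍ[ℝ][X]) (hQ : qconj Q = Q) :
    ∃ n : ℝ[X], n.map (algebraMap ℝ ℍ[ℝ]) = Q := by
  have : Q ∈ (mapRingHom (algebraMap ℝ ℍ[ℝ])).range := by
    rw [Polynomial.mem_map_range]
    intro k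
    refine ⟨(Q.coeff k).re, ?_⟩
    have h1 : star (Q.coeff k) = Q.coeff k := by
      rw [← qconj_coeff, hQ]
    have h2 := Quaternion.star_eq_self.mp h1
    rw [show (algebraMap ℝ ℍ[ℝ]) (Q.coeff k).re = ((Q.coeff k).re : ℍ[ℝ]) from rfl, ← h2]
  obtain ⟨n, hn⟩ := this
  exact ⟨n, hn⟩

/-- Auxiliary step in Lemma 3 of the paper: if `P` has no nonconstant real
polynomial factor, `P conj P ⬝ M` divides the real polynomial `S`, and
`conj P ⬝ S' = conj P ⬝ P ⬝ P₁` with `S'` real, then `P conj P` divides `S'`. -/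
theorem real_divisibility_transfer (P P₁ : ℍ[ℝ][X]) (M S S' : ℝ[X])
    (hP : ∀ r : ℝ[X], 0 < r.degree → ¬ r.map (algebraMap ℝ ℍ[ℝ]) ∣ P)
    (hPc : ∀ r : ℝ[X], 0 < r.degree → ¬ r.map (algebraMap ℝ ℍ[ℝ]) ∣ qconj P)
    (hMS : P * qconj P * M.map (algebraMap ℝ ℍ[ℝ]) ∣ S.map (algebraMap ℝ ℍ[ℝ]))
    (h : qconj P * S'.map (algebraMap ℝ ℍ[ℝ]) = qconj P * P * P₁) :
    P * qconj P ∣ S'.map (algebraMap ℝ ℍ[ℝ]) := by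
  set f := algebraMap ℝ ℍ[ℝ] with hf
  have hP0 : P ≠ 0 := by
    intro h0
    exact hP X (by rw [degree_X]; exact zero_lt_one) (h0 ▸ dvd_zero _)
  have hQ0 : qconj P ≠ 0 := by
    intro h0
    apply hP0
    apply Polynomial.ext
    intro k
    have hk := congrArg (fun p : ℍ[ℝ][X] => p.coeff k) h0
    simp only [qconj_coeff, coeff_zero] at hk
    rw [coeff_zero]
    exact star_eq_zero.mp hk
  have hS : S'.map f = P * P₁ := mul_left_cancel₀ hQ0 (by rw [h, mul_assoc])
  have hNfix : qconj (P * qconj P) = P * qconj P := by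
    rw [qconj_mul, qconj_qconj]
  obtain ⟨n, hn⟩ := exists_real _ hNfix
  have hn0 : n ≠ 0 := by
    rintro rfl
    rw [Polynomial.map_zero] at hn
    rcases mul_eq_zero.mp hn.symm with h' | h'
    · exact hP0 h'
    · exact hQ0 h'
  set a := EuclideanDomain.gcdA S' n with ha
  set b := EuclideanDomain.gcdB S' n with hb
  set g := EuclideanDomain.gcd S' n with hg'
  have hbez : g = S' * a + n * b := EuclideanDomain.gcd_eq_gcd_ab S' n
  obtain ⟨c, hc⟩ : g ∣ n := EuclideanDomain.gcd_dvd_right S' n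
  have hgmap : g.map f = P * (P₁ * a.map f + qconj P * b.map f) := by
    rw [hbez, Polynomial.map_add, Polynomial.map_mul, Polynomial.map_mul, hS, hn,
      mul_add, mul_assoc, mul_assoc]
  have hcancel : qconj P = (P₁ * a.map f + qconj P * b.map f) * c.map f := by
    apply mul_left_cancel₀ hP0
    rw [← mul_assoc, ← hgmap, ← Polynomial.map_mul, ← hc, hn]
  have hdvd : c.map f ∣ qconj P :=
    ⟨P₁ * a.map f + qconj P * b.map f, by
      conv_lhs => rw [hcancel]
      exact (map_commute c _).symm⟩
  have hcdeg : ¬ 0 < c.degree := fun hd => hPc c hd hdvd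
  have hc0 : c ≠ 0 := by
    rintro rfl
    rw [mul_zero] at hc
    exact hn0 hc
  have hcu : IsUnit c := by
    rw [Polynomial.isUnit_iff_degree_eq_zero]
    exact le_antisymm (not_lt.mp hcdeg) (Polynomial.zero_le_degree_iff.mpr hc0)
  have hng : n ∣ g := hc ▸ (hcu.mul_right_dvd.mpr (dvd_refl g))
  obtain ⟨d, hd⟩ := hng.trans (EuclideanDomain.gcd_dvd_left S' n)
  exact ⟨d.map f, by rw [hd, Polynomial.map_mul, hn]⟩
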